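/- Let R be a semilocal ring, M a right R-module, and S' the sum of all simple direct summands of M. Then M is simple-direct-injective if and only if S' is a fully invariant submodule and a direct summand of M. -/

import Mathlib

section Defs

variable (R : Type*) [Ring R] (M : Type*) [AddCommGroup M] [Module R M]

/-- `K` is a small (superfluous) submodule of `M`. -/
def SmallSubmodule (K : Submodule R M) : Prop :=
  ∀ N : Submodule R M, K ⊔ N = ⊤ → N = ⊤

/-- `A` is a direct summand of `M`. -/
def IsDirectSummand (A : Submodule R M) : Prop :=
  ∃ B : Submodule R M, IsCompl A B

/-- The socle of `M`: the sum of all simple submodules. -/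
def moduleSocle : Submodule R M :=
  sSup {S : Submodule R M | IsSimpleModule R S}

/-- The (Jacobson) radical of `M`: the intersection of all maximal submodules. -/
def moduleRad : Submodule R M :=
  sInf {S : Submodule R M | IsCoatom S}

/-- `M` is simple-direct-projective. -/
def SimpleDirectProjective : Prop :=
  ∀ A B : Submodule R M, IsSimpleModule R B → Nonempty ((M ⧸ A) ≃ₗ[R] B) →
    IsDirectSummand R M B → IsDirectSummand R M A

/-- `M` is simple-direct-injective. -/
def SimpleDirectInjective : Prop :=
  ∀ A B : Submodule R M, IsSimpleModule R A → IsSimpleModule R B →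
    Nonempty (A ≃ₗ[R] B) → IsDirectSummand R M B → IsDirectSummand R M A

/-- `L` is a coclosed submodule of `M`. -/
def CoclosedSubmodule (L : Submodule R M) : Prop :=
  ∀ K : Submodule R M, K ≤ L →
    SmallSubmodule R (M ⧸ K) (L.map K.mkQ) → K = L

end Defs

/-- The `p`-primary component of an abelian group `M`. -/
def primaryComponent (M : Type*) [AddCommGroup M] (p : ℕ) : Submodule ℤ M :=
  Submodule.torsion' ℤ M (Submonoid.powers (p : ℤ))

section Aux
variable {R : Type*} [Ring R] {M : Type*} [AddCommGroup M] [Module R M]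

/-- A sum of simple submodules is a semisimple module. -/
lemma aux_semisimple_sSup (s : Set (Submodule R M)) (hs : ∀ A ∈ s, IsSimpleModule R A) :
    IsSemisimpleModule R ↥(sSup s) := by
  have h : sSup s = ⨆ a ∈ s, (a : Submodule R M) := sSup_eq_iSup
  rw [h]
  exact isSemisimpleModule_biSup_of_isSemisimpleModule_submodule
    (fun A hA => haveI := hs A hA; inferInstance)

/-- Relative complement inside a semisimple submodule. -/
lemma aux_compl_in (p : Submodule R M) (hp : IsSemisimpleModule R ↥p) {A : Submodule R M}
    (hA : A ≤ p) : ∃ D ≤ p, A ⊓ D = ⊥ ∧ A ⊔ D = p := by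
  haveI := hp
  obtain ⟨D', hD'⟩ := exists_isCompl (Submodule.comap p.subtype A)
  refine ⟨Submodule.map p.subtype D', Submodule.map_subtype_le _ _, ?_, ?_⟩
  · have h1 : A = Submodule.map p.subtype (Submodule.comap p.subtype A) := by
      rw [Submodule.map_comap_subtype, inf_eq_right.mpr hA]
    rw [h1, ← Submodule.map_inf _ p.injective_subtype, disjoint_iff.mp hD'.disjoint,
      Submodule.map_bot]
  · have h1 : A = Submodule.map p.subtype (Submodule.comap p.subtype A) := by
      rw [Submodule.map_comap_subtype, inf_eq_right.mpr hA]
    rw [h1, ← Submodule.map_sup, codisjoint_iff.mp hD'.codisjoint, Submodule.map_top,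
      Submodule.range_subtype]

/-- A simple submodule of a sum of simple submodules is isomorphic to one of them. -/
lemma aux_simple_iso (s : Set (Submodule R M)) (hs : ∀ B ∈ s, IsSimpleModule R B)
    {A : Submodule R M} (hAs : IsSimpleModule R A) (hA : A ≤ sSup s) :
    ∃ B ∈ s, Nonempty (A ≃ₗ[R] B) := by
  obtain ⟨D, hDp, hAD, hADs⟩ := aux_compl_in (sSup s) (aux_semisimple_sSup s hs) hA
  set q := D.mkQ with hq
  -- the map to the quotient by D is injective on any submodule meeting D trivially
  have key : ∀ C : Submodule R M, C ⊓ D = ⊥ →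
      Nonempty (C ≃ₗ[R] ↥(Submodule.map q C)) := by
    intro C hC
    have hinj : Function.Injective (q.comp C.subtype) := by
      rw [← LinearMap.ker_eq_bot, LinearMap.ker_comp]
      rw [Submodule.ker_mkQ]
      rw [Submodule.eq_bot_iff]
      rintro ⟨x, hxC⟩ hx
      have hxD : x ∈ D := hx
      have : x ∈ C ⊓ D := ⟨hxC, hxD⟩
      rw [hC] at this
      exact Subtype.ext this
    have hrange : LinearMap.range (q.comp C.subtype) = Submodule.map q C := by
      rw [LinearMap.range_comp, Submodule.range_subtype]
    exact ⟨(LinearEquiv.ofInjective _ hinj).trans (LinearEquiv.ofEq _ _ hrange)⟩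
  obtain ⟨e₁⟩ := key A hAD
  -- some member of s is not contained in D
  have hAne : A ≠ ⊥ := (isSimpleModule_iff_isAtom.mp hAs).1
  obtain ⟨B, hBs, hBD⟩ : ∃ B ∈ s, ¬ B ≤ D := by
    by_contra h
    push_neg at h
    have : sSup s ≤ D := sSup_le h
    have hAD' : A ≤ D := hA.trans this
    exact hAne (by rw [← hAD, inf_eq_left.mpr hAD'])
  have hBDbot : B ⊓ D = ⊥ := by
    rcases (isSimpleModule_iff_isAtom.mp (hs B hBs)).le_iff.mp (inf_le_left (b := D)) with h | h
    · exact h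
    · exact absurd (inf_eq_left.mp h) hBD
  obtain ⟨e₂⟩ := key B hBDbot
  -- map q B = map q A
  have hmapD : Submodule.map q D = ⊥ := by
    rw [Submodule.eq_bot_iff]
    rintro _ ⟨x, hx, rfl⟩
    simpa [hq] using (Submodule.Quotient.mk_eq_zero D).mpr hx
  have hmapS : Submodule.map q (sSup s) = Submodule.map q A := by
    rw [← hADs, Submodule.map_sup, hmapD, sup_bot_eq]
  have hBle : Submodule.map q B ≤ Submodule.map q A := by
    rw [← hmapS]; exact Submodule.map_mono (le_sSup hBs)
  have hBne : Submodule.map q B ≠ ⊥ := by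
    intro h
    apply hBD
    intro x hx
    have : q x ∈ Submodule.map q B := ⟨x, hx, rfl⟩
    rw [h] at this
    have : q x = 0 := this
    simpa [hq] using (Submodule.Quotient.mk_eq_zero D).mp this
  have hAsimp : IsSimpleModule R ↥(Submodule.map q A) := by
    haveI := hAs
    exact IsSimpleModule.congr e₁.symm
  have heq : Submodule.map q B = Submodule.map q A := by
    rcases (isSimpleModule_iff_isAtom.mp hAsimp).le_iff.mp hBle with h | h
    · exact absurd h hBne
    · exact h
  exact ⟨B, hBs, ⟨e₁.trans ((LinearEquiv.ofEq _ _ heq.symm).trans e₂.symm)⟩⟩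

/-- The Jacobson radical annihilates any simple submodule. -/
lemma aux_jann {A : Submodule R M} (hA : IsSimpleModule R A) {j : R}
    (hj : j ∈ (⊥ : Ideal R).jacobson) {a : M} (ha : a ∈ A) : j • a = 0 := by
  haveI := hA
  by_cases h0 : (⟨a, ha⟩ : A) = 0
  · have : a = 0 := by simpa using congrArg Subtype.val h0
    rw [this, smul_zero]
  · have hmax := IsSimpleModule.ker_toSpanSingleton_isMaximal R (M := A) h0
    have hle : (⊥ : Ideal R).jacobson ≤ LinearMap.ker (LinearMap.toSpanSingleton R A ⟨a, ha⟩) :=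
      sInf_le ⟨bot_le, hmax⟩
    have : LinearMap.toSpanSingleton R A ⟨a, ha⟩ j = 0 := hle hj
    have := congrArg Subtype.val this
    simpa [LinearMap.toSpanSingleton_apply] using this

/-- A simple direct summand cannot be contained in `J(R) • M`. -/
lemma aux_summand_not_in_rad {A N : Submodule R M} (hA : IsSimpleModule R A)
    (hc : IsCompl A N) (hle : A ≤ (⊥ : Ideal R).jacobson • (⊤ : Submodule R M)) : False := by
  haveI := hA
  have hAne : A ≠ ⊥ := (isSimpleModule_iff_isAtom.mp hA).1
  obtain ⟨a, haA, hane⟩ := Submodule.ne_bot_iff A |>.mp hAne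
  set π := A.projectionOnto N hc
  set f : M →ₗ[R] M := A.subtype ∘ₗ π with hf
  have hfa : f a = a := by
    have := Submodule.projectionOnto_apply_left hc ⟨a, haA⟩
    simp [hf, π]
    exact haA
  have hrange : LinearMap.range f ≤ A := by
    rw [hf, LinearMap.range_comp]
    exact (Submodule.map_subtype_le _ _)
  have hmem : a ∈ (⊥ : Ideal R).jacobson • A := by
    have h1 : a ∈ Submodule.map f ((⊥ : Ideal R).jacobson • (⊤ : Submodule R M)) :=
      ⟨a, hle haA, hfa⟩
    rw [Submodule.map_smul''] at h1
    exact Submodule.smul_mono le_rfl (by rw [Submodule.map_top]; exact hrange) h1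
  have hbot : (⊥ : Ideal R).jacobson • A ≤ ⊥ := by
    rw [Submodule.smul_le]
    intro r hr n hn
    simpa using aux_jann hA hr hn
  exact hane (by simpa using hbot hmem)

/-- If `R/J` is semisimple, then `M / (J • M)` is semisimple. -/
lemma aux_quot_semisimple (hsl : IsSemisimpleModule R (R ⧸ (⊥ : Ideal R).jacobson)) :
    IsSemisimpleModule R (M ⧸ ((⊥ : Ideal R).jacobson • (⊤ : Submodule R M))) := by
  haveI := hsl
  set Jm := (⊥ : Ideal R).jacobson • (⊤ : Submodule R M)
  apply isSemisimpleModule_of_isSemisimpleModule_submodule'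
    (p := fun x : M ⧸ Jm => Submodule.span R {x})
  · intro x
    obtain ⟨m, rfl⟩ := Jm.mkQ_surjective x
    have hker : (⊥ : Ideal R).jacobson ≤
        LinearMap.ker (LinearMap.toSpanSingleton R (M ⧸ Jm) (Jm.mkQ m)) := by
      intro j hj
      rw [LinearMap.mem_ker, LinearMap.toSpanSingleton_apply, ← LinearMap.map_smul,
        Submodule.mkQ_apply, Submodule.Quotient.mk_eq_zero]
      exact Submodule.smul_mem_smul hj trivial
    set g := Submodule.liftQ _ _ hker
    have hr : Submodule.span R {Jm.mkQ m} = LinearMap.range g := by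
      rw [Submodule.range_liftQ, LinearMap.span_singleton_eq_range]
    rw [hr]
    exact IsSemisimpleModule.range g
  · rw [eq_top_iff]
    intro x _
    exact Submodule.mem_iSup_of_mem x (Submodule.mem_span_singleton_self x)

end Aux

/-- Over a semilocal ring (`R/J(R)` semisimple), a module `M` is simple-direct-injective
iff the sum `S'` of all simple direct summands of `M` is a fully invariant submodule and
a direct summand of `M`. -/
theorem stmt_16 {R : Type*} [Ring R]
    (hsl : IsSemisimpleModule R (R ⧸ (⊥ : Ideal R).jacobson))
    (M : Type*) [AddCommGroup M] [Module R M] :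
    SimpleDirectInjective R M ↔
      (∀ f : M →ₗ[R] M,
          Submodule.map f (sSup {S : Submodule R M |
            IsSimpleModule R S ∧ IsDirectSummand R M S}) ≤
            sSup {S : Submodule R M | IsSimpleModule R S ∧ IsDirectSummand R M S}) ∧
      IsDirectSummand R M
        (sSup {S : Submodule R M | IsSimpleModule R S ∧ IsDirectSummand R M S}) := by
  set Sset : Set (Submodule R M) :=
    {S : Submodule R M | IsSimpleModule R S ∧ IsDirectSummand R M S} with hSset
  have hsimp : ∀ B ∈ Sset, IsSimpleModule R B := fun B h => h.1
  have hss : IsSemisimpleModule R ↥(sSup Sset) := aux_semisimple_sSup Sset hsimp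
  constructor
  · intro hSDI
    constructor
    · -- fully invariant
      intro f
      have h : sSup Sset = ⨆ B ∈ Sset, (B : Submodule R M) := sSup_eq_iSup
      conv_lhs => rw [h]
      rw [Submodule.map_iSup]
      refine iSup_le fun B => ?_
      rw [Submodule.map_iSup]
      refine iSup_le fun hB => ?_
      set g := f ∘ₗ B.subtype with hg
      have hmapeq : Submodule.map f B = LinearMap.range g := by
        rw [hg, LinearMap.range_comp, Submodule.range_subtype]
      haveI := hB.1
      rcases eq_bot_or_eq_top (LinearMap.ker g) with hk | hk
      · -- injective: image is simple, isomorphic to B, so a summand by SDI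
        have hinj : Function.Injective g := LinearMap.ker_eq_bot.mp hk
        have e : B ≃ₗ[R] LinearMap.range g := LinearEquiv.ofInjective g hinj
        have hsimple : IsSimpleModule R ↥(LinearMap.range g) := IsSimpleModule.congr e.symm
        have hsummand : IsDirectSummand R M (LinearMap.range g) :=
          hSDI _ B hsimple hB.1 ⟨e.symm⟩ hB.2
        rw [hmapeq]
        exact le_sSup (show LinearMap.range g ∈ Sset from ⟨hsimple, hsummand⟩)
      · -- zero map
        have : g = 0 := LinearMap.ker_eq_top.mp hk
        rw [hmapeq, this, LinearMap.range_zero]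
        exact bot_le
    · -- direct summand
      set Jm := (⊥ : Ideal R).jacobson • (⊤ : Submodule R M) with hJm
      have hdisj : sSup Sset ⊓ Jm = ⊥ := by
        by_contra hne
        haveI := hss
        set W' := Submodule.comap (sSup Sset).subtype (sSup Sset ⊓ Jm) with hW'
        have hmapW' : Submodule.map (sSup Sset).subtype W' = sSup Sset ⊓ Jm := by
          rw [hW', Submodule.map_comap_subtype, inf_eq_right.mpr inf_le_left]
        rcases IsSemisimpleModule.eq_bot_or_exists_simple_le W' with h | ⟨m', hm'le, hm'⟩
        · exact hne (by rw [← hmapW', h, Submodule.map_bot])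
        · set A := Submodule.map (sSup Sset).subtype m' with hA
          haveI := hm'
          have hAsimp : IsSimpleModule R A :=
            IsSimpleModule.congr
              (Submodule.equivMapOfInjective _ (sSup Sset).injective_subtype m').symm
          have hAle : A ≤ sSup Sset ⊓ Jm := by
            rw [← hmapW']; exact Submodule.map_mono hm'le
          obtain ⟨B, hB, ⟨e⟩⟩ := aux_simple_iso Sset hsimp hAsimp (hAle.trans inf_le_left)
          obtain ⟨N, hN⟩ := hSDI A B hAsimp hB.1 ⟨e⟩ hB.2
          exact aux_summand_not_in_rad hAsimp hN (hAle.trans inf_le_right)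
      haveI := aux_quot_semisimple (M := M) hsl
      obtain ⟨K', hK⟩ := exists_isCompl (Submodule.map Jm.mkQ (sSup Sset))
      refine ⟨Submodule.comap Jm.mkQ K', ⟨disjoint_iff.mpr ?_, codisjoint_iff.mpr ?_⟩⟩
      · rw [Submodule.eq_bot_iff]
        rintro x ⟨hx1, hx2⟩
        have h1 : Jm.mkQ x ∈ Submodule.map Jm.mkQ (sSup Sset) ⊓ K' :=
          ⟨⟨x, hx1, rfl⟩, hx2⟩
        rw [disjoint_iff.mp hK.disjoint] at h1
        have hxJ : x ∈ Jm := by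
          simpa [Submodule.Quotient.mk_eq_zero] using h1
        have : x ∈ sSup Sset ⊓ Jm := ⟨hx1, hxJ⟩
        rw [hdisj] at this
        exact this
      · rw [eq_top_iff]
        intro m _
        have : Jm.mkQ m ∈ Submodule.map Jm.mkQ (sSup Sset) ⊔ K' := by
          rw [codisjoint_iff.mp hK.codisjoint]; trivial
        obtain ⟨y, ⟨s, hs, rfl⟩, k, hk, hyk⟩ := Submodule.mem_sup.mp this
        have hms : m - s ∈ Submodule.comap Jm.mkQ K' := by
          have : Jm.mkQ (m - s) = k := by
            rw [map_sub, ← hyk]; abel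
          simpa [Submodule.mem_comap, this] using hk
        have hm : m = s + (m - s) := by abel
        rw [hm]
        exact Submodule.add_mem_sup hs hms
  · rintro ⟨hfi, C, hC⟩
    intro A B hA hB ⟨e⟩ hBsum
    have hBS : B ≤ sSup Sset := le_sSup (show B ∈ Sset from ⟨hB, hBsum⟩)
    obtain ⟨N, hN⟩ := hBsum
    set π := B.linearProjOfIsCompl N hN
    set f : M →ₗ[R] M := A.subtype ∘ₗ (e.symm : B →ₗ[R] A) ∘ₗ π with hf
    have hAle : A ≤ sSup Sset := by
      refine le_trans ?_ (hfi f)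
      intro a ha
      refine ⟨(e ⟨a, ha⟩ : M), hBS (e ⟨a, ha⟩).2, ?_⟩
      have h1 : π ((e ⟨a, ha⟩ : M)) = e ⟨a, ha⟩ :=
        Submodule.linearProjOfIsCompl_apply_left hN (e ⟨a, ha⟩)
      simp [hf, h1]
    obtain ⟨D, hD, hADbot, hADs⟩ := aux_compl_in (sSup Sset) hss hAle
    refine ⟨D ⊔ C, ⟨disjoint_iff.mpr ?_, codisjoint_iff.mpr ?_⟩⟩
    · have hmod : (D ⊔ C) ⊓ sSup Sset = D ⊔ (C ⊓ sSup Sset) := sup_inf_assoc_of_le _ hD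
      have hCS : C ⊓ sSup Sset = ⊥ := by
        rw [inf_comm]; exact disjoint_iff.mp hC.disjoint
      rw [hCS, sup_bot_eq] at hmod
      calc A ⊓ (D ⊔ C) = A ⊓ (sSup Sset ⊓ (D ⊔ C)) := by
            rw [← inf_assoc, inf_eq_left.mpr hAle]
        _ = A ⊓ D := by rw [inf_comm (sSup Sset), hmod]
        _ = ⊥ := hADbot
    · rw [← sup_assoc, hADs]
      exact codisjoint_iff.mp hC.codisjoint
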